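/- If all bases of a hereditary family H have a common element, then H has the star property: some star H⟨x⟩ is a largest intersecting sub-family of H. -/

import Mathlib

open Finset

private lemma cross_lemma {α : Type*} [DecidableEq α] :
    ∀ (n : ℕ) (S B C : Finset (Finset α)),
      (S.sup id).card ≤ n →
      (∀ A ∈ S, ∀ D ⊆ A, D ∈ S) →
      B ⊆ S → C ⊆ S →
      (∀ b ∈ B, ∀ c ∈ C, (b ∩ c).Nonempty) →
      B.card + C.card ≤ S.card := by
  intro n
  induction n with
  | zero =>
    intro S B C hn hS hB hC hcross
    have hsup : S.sup id = ∅ := card_eq_zero.mp (Nat.le_zero.mp hn)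
    rcases B.eq_empty_or_nonempty with hBe | ⟨b, hb⟩
    · simp [hBe]
      exact card_le_card hC
    rcases C.eq_empty_or_nonempty with hCe | ⟨c, hc⟩
    · simp [hCe]
      exact card_le_card hB
    exfalso
    have hbz : b = ∅ := by
      have : b ⊆ S.sup id := le_sup (f := id) (hB hb)
      rw [hsup] at this
      exact subset_empty.mp this
    obtain ⟨z, hz⟩ := hcross b hb c hc
    rw [hbz] at hz
    simp at hz
  | succ n ih =>
    intro S B C hn hS hB hC hcross
    rcases eq_or_ne (S.sup id) ∅ with hsup | hsup
    · -- same base case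
      rcases B.eq_empty_or_nonempty with hBe | ⟨b, hb⟩
      · simp [hBe]
        exact card_le_card hC
      rcases C.eq_empty_or_nonempty with hCe | ⟨c, hc⟩
      · simp [hCe]
        exact card_le_card hB
      exfalso
      have hbz : b = ∅ := by
        have : b ⊆ S.sup id := le_sup (f := id) (hB hb)
        rw [hsup] at this
        exact subset_empty.mp this
      obtain ⟨z, hz⟩ := hcross b hb c hc
      rw [hbz] at hz
      simp at hz
    · obtain ⟨y, hy⟩ := nonempty_iff_ne_empty.mpr hsup
      -- membership description of the "link" image
      have memD : ∀ (F : Finset (Finset α)) (A : Finset α),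
          A ∈ (F.filter (fun A => y ∈ A)).image (fun A => A.erase y) ↔
            y ∉ A ∧ insert y A ∈ F := by
        intro F A
        simp only [mem_image, mem_filter]
        constructor
        · rintro ⟨a, ⟨ha, hya⟩, rfl⟩
          exact ⟨notMem_erase y a, by rwa [insert_erase hya]⟩
        · rintro ⟨hyA, hins⟩
          exact ⟨insert y A, ⟨hins, mem_insert_self y A⟩, erase_insert hyA⟩
      have cardD : ∀ (F : Finset (Finset α)),
          F.card = (F.filter (fun A => y ∉ A)).card +
            ((F.filter (fun A => y ∈ A)).image (fun A => A.erase y)).card := by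
        intro F
        have h2 : ((F.filter (fun A => y ∈ A)).image (fun A => A.erase y)).card
            = (F.filter (fun A => y ∈ A)).card := by
          apply card_image_of_injOn
          intro a ha b hb h
          have hya : y ∈ a := (mem_filter.mp ha).2
          have hyb : y ∈ b := (mem_filter.mp hb).2
          rw [← insert_erase hya, ← insert_erase hyb]
          exact congrArg (insert y) h
        rw [h2]
        rw [add_comm]
        exact (card_filter_add_card_filter_not (p := fun A => y ∈ A)).symm
      set S0 := S.filter (fun A => y ∉ A) with hS0def
      set S1 := (S.filter (fun A => y ∈ A)).image (fun A => A.erase y) with hS1def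
      set B0 := B.filter (fun A => y ∉ A) with hB0def
      set B1 := (B.filter (fun A => y ∈ A)).image (fun A => A.erase y) with hB1def
      set C0 := C.filter (fun A => y ∉ A) with hC0def
      set C1 := (C.filter (fun A => y ∈ A)).image (fun A => A.erase y) with hC1def
      -- sup bounds
      have hsub0 : ∀ A ∈ S0, A ⊆ (S.sup id).erase y := by
        intro A hA
        rw [subset_erase]
        exact ⟨le_sup (f := id) (mem_filter.mp hA).1, (mem_filter.mp hA).2⟩
      have hsub1 : ∀ A ∈ S1, A ⊆ (S.sup id).erase y := by
        intro A hA
        obtain ⟨hyA, hins⟩ := (memD S A).mp hA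
        rw [subset_erase]
        refine ⟨?_, hyA⟩
        exact (subset_insert y A).trans (le_sup (f := id) hins)
      have hcarde : ((S.sup id).erase y).card ≤ n := by
        have := card_erase_of_mem hy
        have hpos : 0 < (S.sup id).card := card_pos.mpr ⟨y, hy⟩
        omega
      have hn0 : (S0.sup id).card ≤ n :=
        le_trans (card_le_card (Finset.sup_le hsub0)) hcarde
      have hn1 : (S1.sup id).card ≤ n :=
        le_trans (card_le_card (Finset.sup_le hsub1)) hcarde
      -- heredity
      have hS0 : ∀ A ∈ S0, ∀ D ⊆ A, D ∈ S0 := by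
        intro A hA D hD
        obtain ⟨hAS, hyA⟩ := mem_filter.mp hA
        exact mem_filter.mpr ⟨hS A hAS D hD, fun h => hyA (hD h)⟩
      have hS1 : ∀ A ∈ S1, ∀ D ⊆ A, D ∈ S1 := by
        intro A hA D hD
        obtain ⟨hyA, hins⟩ := (memD S A).mp hA
        refine (memD S D).mpr ⟨fun h => hyA (hD h), ?_⟩
        exact hS _ hins _ (insert_subset_insert y hD)
      -- subset facts
      have hB0S : B0 ⊆ S0 := by
        intro A hA
        obtain ⟨hAB, hyA⟩ := mem_filter.mp hA
        exact mem_filter.mpr ⟨hB hAB, hyA⟩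
      have hC0S : C0 ⊆ S0 := by
        intro A hA
        obtain ⟨hAC, hyA⟩ := mem_filter.mp hA
        exact mem_filter.mpr ⟨hC hAC, hyA⟩
      have hB1S1 : B1 ⊆ S1 := by
        intro A hA
        obtain ⟨hyA, hins⟩ := (memD B A).mp hA
        exact (memD S A).mpr ⟨hyA, hB hins⟩
      have hC1S1 : C1 ⊆ S1 := by
        intro A hA
        obtain ⟨hyA, hins⟩ := (memD C A).mp hA
        exact (memD S A).mpr ⟨hyA, hC hins⟩
      have hB1S0 : B1 ⊆ S0 := by
        intro A hA
        obtain ⟨hyA, hins⟩ := (memD B A).mp hA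
        exact mem_filter.mpr ⟨hS _ (hB hins) _ (subset_insert y A), hyA⟩
      -- first application of IH : on S0 with (B0 ∪ B1, (C0 ∩ C1) ∪ (C0 \ S1))
      have ih1 : (B0 ∪ B1).card + ((C0 ∩ C1) ∪ (C0 \ S1)).card ≤ S0.card := by
        apply ih S0 _ _ hn0 hS0
        · exact union_subset hB0S hB1S0
        · intro A hA
          rcases mem_union.mp hA with h | h
          · exact hC0S (mem_inter.mp h).1
          · exact hC0S (mem_sdiff.mp h).1
        · intro b hb c hc
          have hcC0 : c ∈ C0 := by
            rcases mem_union.mp hc with h | h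
            · exact (mem_inter.mp h).1
            · exact (mem_sdiff.mp h).1
          obtain ⟨hcC, hyc⟩ := mem_filter.mp hcC0
          rcases mem_union.mp hb with h | h
          · exact hcross b (mem_filter.mp h).1 c hcC
          · obtain ⟨hyb, hins⟩ := (memD B b).mp h
            obtain ⟨z, hz⟩ := hcross (insert y b) hins c hcC
            obtain ⟨hz1, hz2⟩ := mem_inter.mp hz
            have hzy : z ≠ y := fun h => hyc (h ▸ hz2)
            rcases mem_insert.mp hz1 with h' | h'
            · exact absurd h' hzy
            · exact ⟨z, mem_inter.mpr ⟨h', hz2⟩⟩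
      -- second application of IH : on S1 with (B0 ∩ B1, (C0 ∩ S1) ∪ C1)
      have ih2 : (B0 ∩ B1).card + ((C0 ∩ S1) ∪ C1).card ≤ S1.card := by
        apply ih S1 _ _ hn1 hS1
        · intro A hA
          exact hB1S1 (mem_inter.mp hA).2
        · intro A hA
          rcases mem_union.mp hA with h | h
          · exact (mem_inter.mp h).2
          · exact hC1S1 h
        · intro b hb c hc
          obtain ⟨hb0, hb1⟩ := mem_inter.mp hb
          obtain ⟨hbB, hyb⟩ := mem_filter.mp hb0
          rcases mem_union.mp hc with h | h
          · exact hcross b hbB c (mem_filter.mp (mem_inter.mp h).1).1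
          · obtain ⟨hyc, hins⟩ := (memD C c).mp h
            obtain ⟨z, hz⟩ := hcross b hbB (insert y c) hins
            obtain ⟨hz1, hz2⟩ := mem_inter.mp hz
            have hzy : z ≠ y := fun h => hyb (h ▸ hz1)
            rcases mem_insert.mp hz2 with h' | h'
            · exact absurd h' hzy
            · exact ⟨z, mem_inter.mpr ⟨hz1, h'⟩⟩
      -- arithmetic
      have e1 : (B0 ∪ B1).card + (B0 ∩ B1).card = B0.card + B1.card :=
        card_union_add_card_inter _ _
      have e2 : ((C0 ∩ S1) ∪ C1).card + ((C0 ∩ S1) ∩ C1).card = (C0 ∩ S1).card + C1.card :=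
        card_union_add_card_inter _ _
      have e3 : (C0 ∩ S1) ∩ C1 = C0 ∩ C1 := by
        ext A
        simp only [mem_inter]
        constructor
        · rintro ⟨⟨h1, _⟩, h3⟩
          exact ⟨h1, h3⟩
        · rintro ⟨h1, h3⟩
          exact ⟨⟨h1, hC1S1 h3⟩, h3⟩
      have e4 : ((C0 ∩ C1) ∪ (C0 \ S1)).card = (C0 ∩ C1).card + (C0 \ S1).card := by
        apply card_union_of_disjoint
        rw [disjoint_left]
        intro a ha ha'
        exact (mem_sdiff.mp ha').2 (hC1S1 (mem_inter.mp ha).2)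
      have e5 : (C0 ∩ S1).card + (C0 \ S1).card = C0.card := card_inter_add_card_sdiff _ _
      have e6 : S.card = S0.card + S1.card := cardD S
      have e7 : B.card = B0.card + B1.card := cardD B
      have e8 : C.card = C0.card + C1.card := cardD C
      rw [e3] at e2
      omega

theorem schonheim_star_property {α : Type*} [DecidableEq α]
    (H : Finset (Finset α))
    (hH : ∀ A ∈ H, ∀ B ⊆ A, B ∈ H)
    (hcommon : ∃ x : α, ∀ B ∈ H, (∀ C ∈ H, B ⊆ C → B = C) → x ∈ B) :
    ∃ x : α, ∀ 𝒜 ⊆ H, (∀ A ∈ 𝒜, ∀ B ∈ 𝒜, (A ∩ B).Nonempty) →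
      𝒜.card ≤ (H.filter (fun A => x ∈ A)).card := by
  obtain ⟨x, hx⟩ := hcommon
  refine ⟨x, ?_⟩
  intro 𝒜 h𝒜 hint
  -- H is closed under inserting x
  have hstar : ∀ A ∈ H, insert x A ∈ H := by
    intro A hA
    obtain ⟨M, hM, hMmax⟩ := Finset.exists_max_image (H.filter fun C => A ⊆ C)
      (fun C => C.card) ⟨A, mem_filter.mpr ⟨hA, Finset.Subset.refl A⟩⟩
    obtain ⟨hMH, hAM⟩ := mem_filter.mp hM
    have hmax : ∀ C ∈ H, M ⊆ C → M = C := by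
      intro C hC hMC
      exact eq_of_subset_of_card_le hMC (hMmax C (mem_filter.mpr ⟨hC, hAM.trans hMC⟩))
    have hxM : x ∈ M := hx M hMH hmax
    exact hH M hMH _ (insert_subset hxM hAM)
  set S := H.filter (fun A => x ∉ A) with hSdef
  -- |H⟨x⟩| = |S|
  have hcardHx : (H.filter fun A => x ∈ A).card = S.card := by
    apply card_bij (fun A _ => A.erase x)
    · intro A hA
      obtain ⟨hAH, hxA⟩ := mem_filter.mp hA
      exact mem_filter.mpr ⟨hH A hAH _ (erase_subset x A), notMem_erase x A⟩
    · intro a ha b hb h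
      have hxa : x ∈ a := (mem_filter.mp ha).2
      have hxb : x ∈ b := (mem_filter.mp hb).2
      rw [← insert_erase hxa, ← insert_erase hxb, h]
    · intro b hb
      obtain ⟨hbH, hxb⟩ := mem_filter.mp hb
      exact ⟨insert x b, mem_filter.mpr ⟨hstar b hbH, mem_insert_self x b⟩, erase_insert hxb⟩
  set A0 := 𝒜.filter (fun A => x ∉ A) with hA0def
  set A1 := (𝒜.filter (fun A => x ∈ A)).image (fun A => A.erase x) with hA1def
  have memA1 : ∀ B, B ∈ A1 ↔ x ∉ B ∧ insert x B ∈ 𝒜 := by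
    intro B
    simp only [hA1def, mem_image, mem_filter]
    constructor
    · rintro ⟨a, ⟨ha, hxa⟩, rfl⟩
      exact ⟨notMem_erase x a, by rwa [insert_erase hxa]⟩
    · rintro ⟨hxB, hins⟩
      exact ⟨insert x B, ⟨hins, mem_insert_self x B⟩, erase_insert hxB⟩
  have hA0S : A0 ⊆ S := by
    intro A hA
    obtain ⟨hA𝒜, hxA⟩ := mem_filter.mp hA
    exact mem_filter.mpr ⟨h𝒜 hA𝒜, hxA⟩
  have hA1S : A1 ⊆ S := by
    intro A hA
    obtain ⟨hxA, hins⟩ := (memA1 A).mp hA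
    exact mem_filter.mpr ⟨hH _ (h𝒜 hins) _ (subset_insert x A), hxA⟩
  have hShered : ∀ A ∈ S, ∀ D ⊆ A, D ∈ S := by
    intro A hA D hD
    obtain ⟨hAH, hxA⟩ := mem_filter.mp hA
    exact mem_filter.mpr ⟨hH A hAH D hD, fun h => hxA (hD h)⟩
  have hcross : ∀ b ∈ A0 ∪ A1, ∀ c ∈ A0 ∩ A1, (b ∩ c).Nonempty := by
    intro b hb c hc
    have hc0 : c ∈ A0 := (mem_inter.mp hc).1
    obtain ⟨hc𝒜, hxc⟩ := mem_filter.mp hc0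
    rcases mem_union.mp hb with h | h
    · exact hint b (mem_filter.mp h).1 c hc𝒜
    · obtain ⟨hxb, hins⟩ := (memA1 b).mp h
      obtain ⟨z, hz⟩ := hint (insert x b) hins c hc𝒜
      obtain ⟨hz1, hz2⟩ := mem_inter.mp hz
      have hzx : z ≠ x := fun h => hxc (h ▸ hz2)
      rcases mem_insert.mp hz1 with h' | h'
      · exact absurd h' hzx
      · exact ⟨z, mem_inter.mpr ⟨h', hz2⟩⟩
  have key : (A0 ∪ A1).card + (A0 ∩ A1).card ≤ S.card :=
    cross_lemma (S.sup id).card S (A0 ∪ A1) (A0 ∩ A1) le_rfl hShered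
      (union_subset hA0S hA1S) ((inter_subset_left).trans hA0S) hcross
  have e1 : (A0 ∪ A1).card + (A0 ∩ A1).card = A0.card + A1.card :=
    card_union_add_card_inter _ _
  have e2 : 𝒜.card = A0.card + A1.card := by
    have h2 : A1.card = (𝒜.filter (fun A => x ∈ A)).card := by
      apply card_image_of_injOn
      intro a ha b hb h
      have hxa : x ∈ a := (mem_filter.mp ha).2
      have hxb : x ∈ b := (mem_filter.mp hb).2
      rw [← insert_erase hxa, ← insert_erase hxb]
      exact congrArg (insert x) h
    rw [h2, hA0def, add_comm]
    exact (card_filter_add_card_filter_not (p := fun A => x ∈ A)).symm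
  omega
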